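/- Let X₀ ∈ ℝ^{n×T}, U₀ ∈ ℝ^{m×T} be such that the stacked matrix W₀ := [X₀; U₀] has full row rank, let A⋆ ∈ ℝ^{n×n}, B⋆ ∈ ℝ^{n×m}, D₀ ∈ ℝ^{n×T}, Δ ∈ ℝ^{n×n} with D₀ D₀ᵀ ⪯ Δ Δᵀ, and set X₁ := A⋆ X₀ + B⋆ U₀ + D₀. Define 𝐀 := W₀ W₀ᵀ, 𝐁 := −W₀ X₁ᵀ, 𝐂 := X₁ X₁ᵀ − Δ Δᵀ, and 𝐐 := 𝐁ᵀ 𝐀⁻¹ 𝐁 − 𝐂. Then 𝐀 ≻ 0 and 𝐐 ⪰ 0. -/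

import Mathlib

open Matrix

/-- Lemma 1 of the paper: `𝐀 ≻ 0` and `𝐐 ⪰ 0` for the data-consistency ellipsoid. -/
theorem data_ellipsoid_A_posDef_Q_posSemidef {n m T : ℕ}
    (X₀ : Matrix (Fin n) (Fin T) ℝ) (U₀ : Matrix (Fin m) (Fin T) ℝ)
    (A₀ : Matrix (Fin n) (Fin n) ℝ) (B₀ : Matrix (Fin n) (Fin m) ℝ)
    (D₀ : Matrix (Fin n) (Fin T) ℝ) (Δ : Matrix (Fin n) (Fin n) ℝ)
    (hD : (Δ * Δᵀ - D₀ * D₀ᵀ).PosSemidef)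
    (hW : (fromRows X₀ U₀).rank = n + m) :
    let W₀ : Matrix (Fin n ⊕ Fin m) (Fin T) ℝ := fromRows X₀ U₀
    let X₁ : Matrix (Fin n) (Fin T) ℝ := A₀ * X₀ + B₀ * U₀ + D₀
    let AA : Matrix (Fin n ⊕ Fin m) (Fin n ⊕ Fin m) ℝ := W₀ * W₀ᵀ
    let BB : Matrix (Fin n ⊕ Fin m) (Fin n) ℝ := -(W₀ * X₁ᵀ)
    let CC : Matrix (Fin n) (Fin n) ℝ := X₁ * X₁ᵀ - Δ * Δᵀ
    let QQ : Matrix (Fin n) (Fin n) ℝ := BBᵀ * AA⁻¹ * BB - CC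
    AA.PosDef ∧ QQ.PosSemidef := by
  intro W₀ X₁ AA BB CC QQ
  -- AA is positive semidefinite
  have hAAsd : AA.PosSemidef := by
    have := posSemidef_self_mul_conjTranspose W₀
    simpa [AA, Matrix.conjTranspose_eq_transpose_of_trivial] using posSemidef_self_mul_conjTranspose W₀
  -- rank of AA
  have hAArank : AA.rank = n + m := by
    have := Matrix.rank_self_mul_transpose W₀
    exact this.trans hW
  -- kernel of AA is trivial
  have hker : ∀ x : (Fin n ⊕ Fin m) → ℝ, AA *ᵥ x = 0 → x = 0 := by
    have hrn := LinearMap.finrank_range_add_finrank_ker AA.mulVecLin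
    have hdom : Module.finrank ℝ ((Fin n ⊕ Fin m) → ℝ) = n + m := by
      simp [Module.finrank_fintype_fun_eq_card, Fintype.card_sum]
    rw [hdom] at hrn
    have hrr : Module.finrank ℝ (LinearMap.range AA.mulVecLin) = n + m := hAArank
    have hk0 : Module.finrank ℝ (LinearMap.ker AA.mulVecLin) = 0 := by omega
    have hbot : LinearMap.ker AA.mulVecLin = ⊥ := Submodule.finrank_eq_zero.mp hk0
    intro x hx
    have : x ∈ LinearMap.ker AA.mulVecLin := by
      simpa [Matrix.mulVecLin_apply] using hx
    simpa [hbot] using this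
  have hAA : AA.PosDef := by
    refine posDef_iff_dotProduct_mulVec.mpr ⟨hAAsd.1, fun x hx => ?_⟩
    have h1 : 0 ≤ star x ⬝ᵥ AA *ᵥ x := hAAsd.dotProduct_mulVec_nonneg x
    rcases lt_or_eq_of_le h1 with h | h
    · exact h
    · exact absurd (hker x ((hAAsd.dotProduct_mulVec_zero_iff x).mp h.symm)) hx
  refine ⟨hAA, ?_⟩
  -- invertibility facts
  have hdet : IsUnit AA.det := isUnit_iff_ne_zero.mpr (ne_of_gt hAA.det_pos)
  have hl : AA⁻¹ * AA = 1 := Matrix.nonsing_inv_mul AA hdet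
  have hr : AA * AA⁻¹ = 1 := Matrix.mul_nonsing_inv AA hdet
  have hcancel : ∀ {p q : ℕ} (P : Matrix (Fin p) (Fin n ⊕ Fin m) ℝ)
      (Q : Matrix (Fin n ⊕ Fin m) (Fin q) ℝ), P * AA⁻¹ * (AA * Q) = P * Q := by
    intro p q P Q
    rw [Matrix.mul_assoc P, ← Matrix.mul_assoc AA⁻¹, hl, Matrix.one_mul]
  set G : Matrix (Fin n) (Fin n ⊕ Fin m) ℝ := fromCols A₀ B₀ with hG
  have hGW : G * W₀ = A₀ * X₀ + B₀ * U₀ := fromCols_mul_fromRows A₀ B₀ X₀ U₀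
  have hX₁ : X₁ = G * W₀ + D₀ := by rw [hGW]
  -- two key product expansions
  have hS : W₀ * X₁ᵀ = AA * Gᵀ + W₀ * D₀ᵀ := by
    rw [hX₁, Matrix.transpose_add, Matrix.transpose_mul, Matrix.mul_add, ← Matrix.mul_assoc]
  have hSt : X₁ * W₀ᵀ = G * AA + D₀ * W₀ᵀ := by
    rw [hX₁, Matrix.add_mul, Matrix.mul_assoc]
  -- the central algebraic identity
  have hkey : QQ = (Δ * Δᵀ - D₀ * D₀ᵀ) + (D₀ * W₀ᵀ) * AA⁻¹ * (D₀ * W₀ᵀ)ᵀ := by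
    have hBBt : BBᵀ = -(X₁ * W₀ᵀ) := by
      show (-(W₀ * X₁ᵀ))ᵀ = _
      rw [Matrix.transpose_neg, Matrix.transpose_mul, Matrix.transpose_transpose]
    have e1 : BBᵀ * AA⁻¹ * BB = X₁ * W₀ᵀ * AA⁻¹ * (W₀ * X₁ᵀ) := by
      rw [hBBt]
      show -(X₁ * W₀ᵀ) * AA⁻¹ * -(W₀ * X₁ᵀ) = _
      rw [Matrix.neg_mul, Matrix.neg_mul, Matrix.mul_neg, neg_neg]
    have e2 : X₁ * W₀ᵀ * AA⁻¹ * (W₀ * X₁ᵀ)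
        = G * AA * Gᵀ + G * (W₀ * D₀ᵀ) + D₀ * W₀ᵀ * Gᵀ
          + (D₀ * W₀ᵀ) * AA⁻¹ * (W₀ * D₀ᵀ) := by
      rw [hS, hSt]
      simp only [Matrix.add_mul, Matrix.mul_add]
      have t1 : G * AA * AA⁻¹ * (AA * Gᵀ) = G * AA * Gᵀ := by
        rw [hcancel, Matrix.mul_assoc]
      have t2 : G * AA * AA⁻¹ * (W₀ * D₀ᵀ) = G * (W₀ * D₀ᵀ) := by
        rw [Matrix.mul_assoc G AA AA⁻¹, hr, Matrix.mul_one]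
      have t3 : D₀ * W₀ᵀ * AA⁻¹ * (AA * Gᵀ) = D₀ * W₀ᵀ * Gᵀ := hcancel _ _
      rw [t1, t2, t3]
      abel
    have e3 : X₁ * X₁ᵀ = G * AA * Gᵀ + G * (W₀ * D₀ᵀ) + D₀ * W₀ᵀ * Gᵀ + D₀ * D₀ᵀ := by
      rw [hX₁, Matrix.transpose_add, Matrix.transpose_mul, Matrix.add_mul, Matrix.mul_add,
        Matrix.mul_add]
      have : G * W₀ * (W₀ᵀ * Gᵀ) = G * AA * Gᵀ := by
        show _ = G * (W₀ * W₀ᵀ) * Gᵀ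
        rw [Matrix.mul_assoc, Matrix.mul_assoc, Matrix.mul_assoc]
      rw [this, Matrix.mul_assoc G W₀ D₀ᵀ, ← Matrix.mul_assoc D₀ W₀ᵀ Gᵀ]
      abel
    have hWDt : (D₀ * W₀ᵀ)ᵀ = W₀ * D₀ᵀ := by
      rw [Matrix.transpose_mul, Matrix.transpose_transpose]
    show BBᵀ * AA⁻¹ * BB - (X₁ * X₁ᵀ - Δ * Δᵀ) = _
    rw [e1, e2, e3, hWDt]
    abel
  rw [hkey]
  exact hD.add (hAA.posSemidef.inv.mul_mul_conjTranspose_same (D₀ * W₀ᵀ))
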